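/- Let $E_3$ be the event that the Erdős–Rényi random graph $G(n,p)$ has more than $Lnp$ bad vertices, where $L := \log(1/p)$. There is an absolute constant $C > 0$ such that if $p > C^{-1} n^{-1}\log n$ (and $p < 1$), then $\mathbb{P}(E_3) \le e^{-C n^2 p^2 \log(1/p)}$. -/

import Mathlib

open MeasureTheory ProbabilityTheory Real
open scoped Classical ENNReal NNReal

/-- The Erdős–Rényi random graph measure: each (non-diagonal) unordered pair of vertices of
`Fin n` is an edge independently with probability `p`. The sample space records, for each
unordered pair, whether it is an edge. -/
noncomputable def erMeasure (n : ℕ) (p : ℝ≥0) (hp : p ≤ 1) :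
    Measure (Sym2 (Fin n) → Bool) :=
  Measure.pi fun _ => (PMF.bernoulli p (by exact_mod_cast hp)).toMeasure

/-- Adjacency in the realization `ω`. -/
def Adj {n : ℕ} (ω : Sym2 (Fin n) → Bool) (u v : Fin n) : Prop :=
  u ≠ v ∧ ω s(u, v) = true

/-- The degree of a vertex. -/
noncomputable def deg {n : ℕ} (ω : Sym2 (Fin n) → Bool) (u : Fin n) : ℕ :=
  (Finset.univ.filter (fun v => Adj ω u v)).card

/-- `t` is a triangle: a set of three pairwise adjacent vertices. -/
def IsTriangle {n : ℕ} (ω : Sym2 (Fin n) → Bool) (t : Finset (Fin n)) : Prop :=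
  t.card = 3 ∧ ∀ u ∈ t, ∀ v ∈ t, u ≠ v → Adj ω u v

/-- The number of triangles. -/
noncomputable def triangleCount {n : ℕ} (ω : Sym2 (Fin n) → Bool) : ℕ :=
  (Finset.univ.filter (fun t : Finset (Fin n) => IsTriangle ω t)).card

/-- `e` is an edge of the graph. -/
def IsEdge {n : ℕ} (ω : Sym2 (Fin n) → Bool) (e : Sym2 (Fin n)) : Prop :=
  ¬ e.IsDiag ∧ ω e = true

/-- The number of triangles containing both endpoints of `e`. -/
noncomputable def triOnEdge {n : ℕ} (ω : Sym2 (Fin n) → Bool) (e : Sym2 (Fin n)) : ℕ :=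
  (Finset.univ.filter (fun t : Finset (Fin n) => IsTriangle ω t ∧ ∀ u ∈ e, u ∈ t)).card

/-- A good edge: an edge of the graph contained in fewer than `ε ℓ n p` triangles,
where `ℓ = 1 / log(1/p)`. -/
def GoodEdge {n : ℕ} (ε p : ℝ) (ω : Sym2 (Fin n) → Bool) (e : Sym2 (Fin n)) : Prop :=
  IsEdge ω e ∧ (triOnEdge ω e : ℝ) < ε * (1 / Real.log (1 / p)) * n * p

/-- A bad edge: an edge of the graph that is not good. -/
def BadEdge {n : ℕ} (ε p : ℝ) (ω : Sym2 (Fin n) → Bool) (e : Sym2 (Fin n)) : Prop :=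
  IsEdge ω e ∧ ¬ ((triOnEdge ω e : ℝ) < ε * (1 / Real.log (1 / p)) * n * p)

/-- A good vertex: one with fewer than `7np` neighbors. -/
def GoodVertex {n : ℕ} (p : ℝ) (ω : Sym2 (Fin n) → Bool) (u : Fin n) : Prop :=
  (deg ω u : ℝ) < 7 * n * p

/-- `T'`: the number of triangles all of whose edges are good. -/
noncomputable def triGoodEdges {n : ℕ} (ε p : ℝ) (ω : Sym2 (Fin n) → Bool) : ℕ :=
  (Finset.univ.filter (fun t : Finset (Fin n) => IsTriangle ω t ∧
    ∀ u ∈ t, ∀ v ∈ t, u ≠ v → GoodEdge ε p ω s(u, v))).card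

/-- `T₀`: the number of triangles with at least one bad edge but all good vertices. -/
noncomputable def triBadEdgeGoodVerts {n : ℕ} (ε p : ℝ) (ω : Sym2 (Fin n) → Bool) : ℕ :=
  (Finset.univ.filter (fun t : Finset (Fin n) => IsTriangle ω t ∧
    (∃ u ∈ t, ∃ v ∈ t, u ≠ v ∧ BadEdge ε p ω s(u, v)) ∧
    ∀ u ∈ t, GoodVertex p ω u)).card

/-- The number of triangles with exactly `k` bad vertices. -/
noncomputable def triBadVerts {n : ℕ} (p : ℝ) (k : ℕ) (ω : Sym2 (Fin n) → Bool) : ℕ :=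
  (Finset.univ.filter (fun t : Finset (Fin n) => IsTriangle ω t ∧
    (t.filter (fun u => ¬ GoodVertex p ω u)).card = k)).card

/-- `t_{uv}` for `e = {u,v}`: the number of common neighbors of `u` and `v` outside `{u,v}`. -/
noncomputable def commonNbrs {n : ℕ} (ω : Sym2 (Fin n) → Bool) (e : Sym2 (Fin n)) : ℕ :=
  (Finset.univ.filter (fun w => w ∉ e ∧ ∀ u ∈ e, Adj ω u w)).card

/-- A matching: a collection of non-diagonal unordered pairs, no two of which share a vertex. -/
def IsMatching {n : ℕ} (A : Finset (Sym2 (Fin n))) : Prop :=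
  (∀ e ∈ A, ¬ e.IsDiag) ∧ ∀ e ∈ A, ∀ f ∈ A, e ≠ f → ∀ v : Fin n, v ∈ e → v ∉ f

lemma erMeasure_cylinder (n : ℕ) (p : ℝ≥0) (hp : p ≤ 1) (S : Finset (Sym2 (Fin n))) :
    erMeasure n p hp {ω | ∀ e ∈ S, ω e = true} = (p : ℝ≥0∞) ^ S.card := by
  have hset : {ω : Sym2 (Fin n) → Bool | ∀ e ∈ S, ω e = true}
      = Set.pi Set.univ (fun e => if e ∈ S then ({true} : Set Bool) else Set.univ) := by
    ext ω
    simp only [Set.mem_setOf_eq, Set.mem_pi, Set.mem_univ, forall_true_left]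
    constructor
    · intro h e; by_cases he : e ∈ S <;> simp [he, h e]
    · intro h e he; have := h e; simp [he] at this; exact this
  rw [erMeasure, hset, Measure.pi_pi]
  have hfac : ∀ e : Sym2 (Fin n),
      (PMF.bernoulli p (by exact_mod_cast hp)).toMeasure
        (if e ∈ S then ({true} : Set Bool) else Set.univ)
      = if e ∈ S then (p : ℝ≥0∞) else 1 := by
    intro e
    by_cases he : e ∈ S <;> simp only [he, if_true, if_false]
    · rw [PMF.toMeasure_apply_singleton _ _ (measurableSet_singleton _)]
      rfl
    · exact measure_univ
  simp_rw [hfac]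
  rw [Finset.prod_ite_mem]
  simp

lemma card_pairs_mem (n : ℕ) (v : Fin n) :
    (Finset.univ.filter (fun e : Sym2 (Fin n) => v ∈ e)).card ≤ n := by
  have := Finset.card_le_card_of_injOn
    (f := fun e : Sym2 (Fin n) => if h : v ∈ e then Sym2.Mem.other' h else v)
    (s := Finset.univ.filter (fun e : Sym2 (Fin n) => v ∈ e)) (t := Finset.univ)
    (fun _ _ => Finset.mem_univ _) ?_
  · simpa using this
  · intro e₁ h₁ e₂ h₂ hf
    simp only [Finset.mem_coe, Finset.mem_filter] at h₁ h₂
    simp only [dif_pos h₁.2, dif_pos h₂.2] at hf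
    rw [← Sym2.other_spec' h₁.2, ← Sym2.other_spec' h₂.2, hf]

-- double counting
lemma double_count {n : ℕ} (B : Finset (Fin n)) (E : Finset (Sym2 (Fin n))) :
    ∑ v ∈ B, (E.filter (fun e => v ∈ e)).card
      = ∑ e ∈ E, (B.filter (fun v => v ∈ e)).card := by
  simp_rw [Finset.card_filter]
  exact Finset.sum_comm

lemma card_mem_le_two {n : ℕ} (B : Finset (Fin n)) (e : Sym2 (Fin n)) :
    (B.filter (fun v => v ∈ e)).card ≤ 2 := by
  induction e using Sym2.inductionOn with
  | hf a b =>
    have hsub : B.filter (fun v => v ∈ s(a, b)) ⊆ {a, b} := by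
      intro v hv
      simp only [Finset.mem_filter, Sym2.mem_iff] at hv
      simp [hv.2]
    exact (Finset.card_le_card hsub).trans ((Finset.card_insert_le a {b}).trans (by simp))

lemma deg_le_incident {n : ℕ} (ω : Sym2 (Fin n) → Bool) (B : Finset (Fin n))
    (v : Fin n) (hv : v ∈ B) :
    deg ω v ≤ ((Finset.univ.filter (fun e : Sym2 (Fin n) =>
      (¬ e.IsDiag ∧ ∃ u ∈ B, u ∈ e) ∧ ω e = true)).filter (fun e => v ∈ e)).card := by
  apply Finset.card_le_card_of_injOn (s := Finset.univ.filter (fun u => Adj ω v u)) (fun u => s(v, u))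
  · intro u hu
    simp only [Finset.mem_coe, Finset.mem_filter, Finset.mem_univ, true_and] at hu ⊢
    obtain ⟨hne, hω⟩ := hu
    exact ⟨⟨⟨by simpa using hne, ⟨v, hv, Sym2.mem_mk_left v u⟩⟩, hω⟩, Sym2.mem_mk_left v u⟩
  · intro u₁ _ u₂ _ h
    exact Sym2.congr_right.mp h

lemma numeric_bound (n k m : ℕ) (q L : ℝ) (hn : 1 ≤ n) (hq0 : 0 < q) (hL : 0 < L)
    (hlogn : Real.log n ≤ (n : ℝ) * q / 100)
    (hkL : L * n * q ≤ (k : ℝ))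
    (hm : (17/5 : ℝ) * ((k : ℝ) * ((n : ℝ) * q)) ≤ (m : ℝ)) :
    (n.choose k : ℝ) * ((k * n).choose m : ℝ) * q ^ m
      ≤ Real.exp (-(1/100) * (n : ℝ)^2 * q^2 * L) := by
  set a : ℝ := (k : ℝ) * ((n : ℝ) * q) with ha
  have hn0 : (0:ℝ) < (n:ℝ) := by exact_mod_cast Nat.lt_of_lt_of_le Nat.zero_lt_one hn
  have hk0 : (0:ℝ) ≤ (k:ℝ) := Nat.cast_nonneg k
  have ha0 : 0 ≤ a := by positivity
  have hm0 : (0:ℝ) ≤ (m:ℝ) := Nat.cast_nonneg m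
  -- step 1 : choose bounds
  have h1 : (n.choose k : ℝ) ≤ (n : ℝ) ^ k := by
    exact_mod_cast Nat.choose_le_pow n k
  have h2 : ((k * n).choose m : ℝ) ≤ ((k * n : ℕ) : ℝ) ^ m / (m.factorial : ℝ) :=
    Nat.choose_le_pow_div m (k * n)
  -- step 2 : a^m / m! ≤ (4/5)^m
  have hfac0 : (0:ℝ) < (m.factorial : ℝ) := by exact_mod_cast m.factorial_pos
  have key : a ^ m / (m.factorial : ℝ) ≤ (4/5 : ℝ) ^ m := by
    have hma : a ≤ (5/17 : ℝ) * m := by linarith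
    have e1 : a ^ m ≤ ((5/17 : ℝ) * m) ^ m := pow_le_pow_left₀ ha0 hma m
    have e2 : (m : ℝ) ^ m / (m.factorial : ℝ) ≤ Real.exp m :=
      Real.pow_div_factorial_le_exp (m:ℝ) hm0 m
    have e3 : Real.exp (m : ℝ) = Real.exp 1 ^ m := (Real.exp_one_pow m).symm
    have e4 : ((5/17 : ℝ)) ^ m * ((m:ℝ) ^ m / (m.factorial : ℝ)) ≤ (5/17 : ℝ) ^ m * Real.exp 1 ^ m := by
      apply mul_le_mul_of_nonneg_left _ (by positivity)
      rw [← e3]; exact e2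
    have e5 : (5/17 : ℝ) ^ m * Real.exp 1 ^ m ≤ (4/5 : ℝ) ^ m := by
      rw [← mul_pow]
      apply pow_le_pow_left₀ (by positivity)
      nlinarith [Real.exp_one_lt_d9]
    calc a ^ m / (m.factorial : ℝ) ≤ ((5/17 : ℝ) * m) ^ m / (m.factorial : ℝ) := by
          gcongr
      _ = (5/17 : ℝ) ^ m * ((m:ℝ) ^ m / (m.factorial : ℝ)) := by
          rw [mul_pow]; ring
      _ ≤ (4/5 : ℝ) ^ m := e4.trans e5
  -- combine into n^k * (4/5)^m
  have hstep : (n.choose k : ℝ) * ((k * n).choose m : ℝ) * q ^ m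
      ≤ (n : ℝ) ^ k * (4/5 : ℝ) ^ m := by
    have hq' : (0:ℝ) ≤ q ^ m := by positivity
    have : ((k * n : ℕ) : ℝ) ^ m / (m.factorial : ℝ) * q ^ m = a ^ m / (m.factorial : ℝ) := by
      push_cast
      rw [div_mul_eq_mul_div, ← mul_pow, ha]
      ring_nf
    calc (n.choose k : ℝ) * ((k * n).choose m : ℝ) * q ^ m
        ≤ (n : ℝ) ^ k * (((k * n : ℕ) : ℝ) ^ m / (m.factorial : ℝ)) * q ^ m := by
          apply mul_le_mul_of_nonneg_right _ hq'
          apply mul_le_mul h1 h2 (by positivity) (by positivity)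
      _ = (n : ℝ) ^ k * (a ^ m / (m.factorial : ℝ)) := by rw [mul_assoc, this]
      _ ≤ (n : ℝ) ^ k * (4/5 : ℝ) ^ m := by
          apply mul_le_mul_of_nonneg_left key (by positivity)
  refine hstep.trans ?_
  -- exponential form
  have hnk : (n : ℝ) ^ k = Real.exp ((k : ℝ) * Real.log n) := by
    rw [Real.exp_nat_mul, Real.exp_log hn0]
  have h45 : (4/5 : ℝ) ^ m = Real.exp ((m : ℝ) * Real.log (4/5)) := by
    rw [Real.exp_nat_mul, Real.exp_log (by norm_num)]
  rw [hnk, h45, ← Real.exp_add, Real.exp_le_exp]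
  -- final linear arithmetic
  have hlog45 : Real.log (4/5 : ℝ) ≤ -(1/5) := by
    have := Real.log_le_sub_one_of_pos (by norm_num : (0:ℝ) < 4/5)
    linarith
  have t1 : (k : ℝ) * Real.log n ≤ (k : ℝ) * ((n:ℝ) * q / 100) :=
    mul_le_mul_of_nonneg_left hlogn hk0
  have t2 : (m : ℝ) * Real.log (4/5) ≤ (m : ℝ) * (-(1/5)) :=
    mul_le_mul_of_nonneg_left hlog45 hm0
  have t3 : (m : ℝ) * (-(1/5)) ≤ ((17/5 : ℝ) * a) * (-(1/5)) := by nlinarith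
  have hLnq : 0 ≤ L * n * q := by positivity
  nlinarith [mul_le_mul_of_nonneg_right hkL (le_of_lt (mul_pos hn0 hq0)),
    sq_nonneg ((n:ℝ) * q), mul_nonneg (mul_nonneg hL.le hn0.le) hq0.le]


/-- **Lemma 6.3**: with high probability there are at most `L n p` bad vertices,
where `L = log(1/p)`. -/
theorem E3_tail :
    ∃ C : ℝ, 0 < C ∧ ∀ (n : ℕ) (p : ℝ≥0) (hp : p ≤ 1),
      C⁻¹ * Real.log n / n < (p : ℝ) → (p : ℝ) < 1 →
      erMeasure n p hp
          {ω | Real.log (1 / (p : ℝ)) * n * (p : ℝ) <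
                ((Finset.univ.filter (fun u => ¬ GoodVertex (p : ℝ) ω u)).card : ℝ)}
        ≤ ENNReal.ofReal
            (Real.exp (-C * (n : ℝ) ^ 2 * (p : ℝ) ^ 2 * Real.log (1 / (p : ℝ)))) := by
  refine ⟨1/100, by norm_num, ?_⟩
  intro n p hp hlow hp1
  set q : ℝ := (p : ℝ) with hqdef
  have hq0 : 0 < q := by
    refine lt_of_le_of_lt ?_ hlow
    apply div_nonneg (mul_nonneg (by norm_num) (Real.log_natCast_nonneg n)) (Nat.cast_nonneg n)
  have hL : 0 < Real.log (1 / q) := Real.log_pos (one_lt_one_div hq0 hp1)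
  rcases Nat.eq_zero_or_pos n with hn0 | hn
  · subst hn0
    have hempty : {ω : Sym2 (Fin 0) → Bool | Real.log (1 / q) * (0:ℕ) * q <
        ((Finset.univ.filter (fun u => ¬ GoodVertex q ω u)).card : ℝ)} = ∅ := by
      ext ω
      simp
    rw [hempty, measure_empty]
    exact zero_le
  have hn0R : (0:ℝ) < (n:ℝ) := by exact_mod_cast hn
  have hlogn : Real.log n ≤ (n:ℝ) * q / 100 := by
    have h100 : (100:ℝ) * Real.log n / n < q := by
      have : ((1:ℝ)/100)⁻¹ = 100 := by norm_num
      rwa [this] at hlow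
    rw [div_lt_iff₀ hn0R] at h100
    nlinarith
  set L : ℝ := Real.log (1 / q) with hLdef
  set k : ℕ := ⌊L * n * q⌋₊ + 1 with hkdef
  set m : ℕ := ⌊(17/5 : ℝ) * ((k:ℝ) * ((n:ℝ) * q))⌋₊ + 1 with hmdef
  have hk1 : 1 ≤ k := Nat.le_add_left 1 _
  have hkL : L * n * q ≤ (k : ℝ) := by
    have := Nat.lt_floor_add_one (L * n * q)
    push_cast [hkdef]
    push_cast at this
    linarith
  have hmlow : (17/5 : ℝ) * ((k:ℝ) * ((n:ℝ) * q)) ≤ (m : ℝ) := by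
    have := Nat.lt_floor_add_one ((17/5 : ℝ) * ((k:ℝ) * ((n:ℝ) * q)))
    push_cast [hmdef]
    push_cast at this
    linarith
  set PB : Finset (Fin n) → Finset (Sym2 (Fin n)) :=
    fun B => Finset.univ.filter (fun e => ¬ e.IsDiag ∧ ∃ v ∈ B, v ∈ e) with hPBdef
  set 𝒮 : Finset (Finset (Sym2 (Fin n))) :=
    (Finset.univ.powersetCard k).biUnion (fun B => (PB B).powersetCard m) with h𝒮def
  -- inclusion
  have hincl : {ω : Sym2 (Fin n) → Bool | Real.log (1 / q) * n * q <
        ((Finset.univ.filter (fun u => ¬ GoodVertex q ω u)).card : ℝ)}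
      ⊆ ⋃ S ∈ 𝒮, {ω : Sym2 (Fin n) → Bool | ∀ e ∈ S, ω e = true} := by
    intro ω hω
    simp only [Set.mem_setOf_eq] at hω
    have hkcard : k ≤ (Finset.univ.filter (fun u => ¬ GoodVertex q ω u)).card := by
      have h0 : 0 ≤ L * n * q := by positivity
      have := (Nat.floor_lt h0).2 hω
      omega
    obtain ⟨B, hBsub, hBcard⟩ :=
      Finset.exists_subset_card_eq hkcard
    set EB : Finset (Sym2 (Fin n)) := Finset.univ.filter (fun e : Sym2 (Fin n) =>
      (¬ e.IsDiag ∧ ∃ v ∈ B, v ∈ e) ∧ ω e = true) with hEBdef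
    have hdegB : ∀ v ∈ B, 7 * (n:ℝ) * q ≤ (deg ω v : ℝ) := by
      intro v hv
      have := hBsub hv
      simp only [Finset.mem_filter, GoodVertex, not_lt] at this
      exact this.2
    have hnat : ∑ v ∈ B, deg ω v ≤ 2 * EB.card := by
      calc ∑ v ∈ B, deg ω v ≤ ∑ v ∈ B, (EB.filter (fun e => v ∈ e)).card :=
            Finset.sum_le_sum (fun v hv => deg_le_incident ω B v hv)
        _ = ∑ e ∈ EB, (B.filter (fun v => v ∈ e)).card := double_count B EB
        _ ≤ ∑ _e ∈ EB, 2 := Finset.sum_le_sum (fun e _ => card_mem_le_two B e)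
        _ = 2 * EB.card := by rw [Finset.sum_const, smul_eq_mul, mul_comm]
    have hsum : 7 * (n:ℝ) * q * k ≤ 2 * (EB.card : ℝ) := by
      have h1 : 7 * (n:ℝ) * q * k = ∑ _v ∈ B, 7 * (n:ℝ) * q := by
        rw [Finset.sum_const, hBcard, nsmul_eq_mul]; ring
      have h2 : ∑ v ∈ B, (7 * (n:ℝ) * q) ≤ ∑ v ∈ B, (deg ω v : ℝ) :=
        Finset.sum_le_sum hdegB
      have h3 : ∑ v ∈ B, ((deg ω v : ℕ) : ℝ) ≤ ((2 * EB.card : ℕ) : ℝ) := by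
        rw [← Nat.cast_sum]
        exact_mod_cast hnat
      push_cast at h3
      linarith
    have hmEB : m ≤ EB.card := by
      have hknq : 0 < (k:ℝ) * ((n:ℝ) * q) := by
        have : (0:ℝ) < (k:ℝ) := by exact_mod_cast hk1
        positivity
      have hlt : (17/5 : ℝ) * ((k:ℝ) * ((n:ℝ) * q)) < (EB.card : ℝ) := by nlinarith
      have h0 : 0 ≤ (17/5 : ℝ) * ((k:ℝ) * ((n:ℝ) * q)) := le_of_lt (by positivity)
      have := (Nat.floor_lt h0).2 hlt
      omega
    obtain ⟨S, hSsub, hScard⟩ := Finset.exists_subset_card_eq hmEB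
    have hS𝒮 : S ∈ 𝒮 := by
      rw [h𝒮def, Finset.mem_biUnion]
      refine ⟨B, Finset.mem_powersetCard_univ.2 hBcard, ?_⟩
      rw [Finset.mem_powersetCard]
      refine ⟨fun e he => ?_, hScard⟩
      have := hSsub he
      rw [hEBdef, Finset.mem_filter] at this
      rw [hPBdef, Finset.mem_filter]
      exact ⟨Finset.mem_univ _, this.2.1⟩
    refine Set.mem_biUnion hS𝒮 ?_
    intro e he
    have := hSsub he
    rw [hEBdef, Finset.mem_filter] at this
    exact this.2.2
  -- measure computation
  have hcard𝒮 : 𝒮.card ≤ n.choose k * ((k * n).choose m) := by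
    calc 𝒮.card ≤ ∑ B ∈ Finset.univ.powersetCard k, ((PB B).powersetCard m).card :=
          Finset.card_biUnion_le
      _ ≤ ∑ _B ∈ Finset.univ.powersetCard k, (k * n).choose m := by
          apply Finset.sum_le_sum
          intro B hB
          rw [Finset.card_powersetCard]
          apply Nat.choose_le_choose
          have hBk : B.card = k := Finset.mem_powersetCard_univ.1 hB
          calc (PB B).card ≤ (B.biUnion (fun v =>
                Finset.univ.filter (fun e : Sym2 (Fin n) => v ∈ e))).card := by
                apply Finset.card_le_card
                intro e he
                rw [hPBdef, Finset.mem_filter] at he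
                obtain ⟨v, hv, hve⟩ := he.2.2
                exact Finset.mem_biUnion.2 ⟨v, hv, Finset.mem_filter.2 ⟨Finset.mem_univ _, hve⟩⟩
            _ ≤ ∑ v ∈ B, (Finset.univ.filter (fun e : Sym2 (Fin n) => v ∈ e)).card :=
                Finset.card_biUnion_le
            _ ≤ ∑ _v ∈ B, n := Finset.sum_le_sum (fun v _ => card_pairs_mem n v)
            _ = k * n := by rw [Finset.sum_const, hBk, smul_eq_mul]
      _ = (Finset.univ.powersetCard k).card * ((k * n).choose m) := by
          rw [Finset.sum_const, smul_eq_mul]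
      _ = n.choose k * ((k * n).choose m) := by
          rw [Finset.card_powersetCard, Finset.card_univ, Fintype.card_fin]
  calc erMeasure n p hp {ω | Real.log (1 / q) * n * q <
        ((Finset.univ.filter (fun u => ¬ GoodVertex q ω u)).card : ℝ)}
      ≤ erMeasure n p hp (⋃ S ∈ 𝒮, {ω : Sym2 (Fin n) → Bool | ∀ e ∈ S, ω e = true}) :=
        measure_mono hincl
    _ ≤ ∑ S ∈ 𝒮, erMeasure n p hp {ω : Sym2 (Fin n) → Bool | ∀ e ∈ S, ω e = true} :=
        measure_biUnion_finset_le _ _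
    _ = ∑ S ∈ 𝒮, (p : ℝ≥0∞) ^ m := by
        apply Finset.sum_congr rfl
        intro S hS
        rw [erMeasure_cylinder n p hp S]
        congr 1
        rw [h𝒮def, Finset.mem_biUnion] at hS
        obtain ⟨B, _, hSB⟩ := hS
        exact (Finset.mem_powersetCard.1 hSB).2
    _ = (𝒮.card : ℝ≥0∞) * (p : ℝ≥0∞) ^ m := by
        rw [Finset.sum_const, nsmul_eq_mul]
    _ ≤ ((n.choose k * ((k * n).choose m) : ℕ) : ℝ≥0∞) * (p : ℝ≥0∞) ^ m := by
        apply mul_le_mul_left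
        exact_mod_cast hcard𝒮
    _ = ENNReal.ofReal ((n.choose k : ℝ) * ((k * n).choose m : ℝ) * q ^ m) := by
        rw [ENNReal.ofReal_mul (by positivity), ENNReal.ofReal_pow hq0.le]
        rw [hqdef, ENNReal.ofReal_coe_nnreal]
        congr 1
        rw [← ENNReal.ofReal_natCast (n.choose k * ((k * n).choose m))]
        congr 1
        push_cast
        ring
    _ ≤ ENNReal.ofReal (Real.exp (-(1/100) * (n : ℝ) ^ 2 * q ^ 2 * L)) := by
        apply ENNReal.ofReal_le_ofReal
        exact numeric_bound n k m q L hn hq0 hL hlogn hkL hmlow
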